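/- (Weak duality for the KL-loss problem.) Let A be a real symmetric n×n matrix with positive entries. Let X and Y be real symmetric n×n positive semidefinite matrices such that A_{ij} + Y_{ij} > 0 for all i, j. Then Σ_{i,j} [A_{ij} + Y_{ij} − (A_{ij} + Y_{ij}) log(A_{ij} + Y_{ij})] + Σ_{i,j} [A_{ij} log A_{ij} − A_{ij}] ≤ Σ_{i,j} [A_{ij}(log A_{ij} − X_{ij}) + exp(X_{ij}) − A_{ij}]; i.e., the dual objective at Y is at most the primal KL objective at X. -/

import Mathlib

open Matrix

lemma sumXY_nonneg (n : ℕ) (X Y : Matrix (Fin n) (Fin n) ℝ)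
    (hX : X.PosSemidef) (hY : Y.PosSemidef) :
    0 ≤ ∑ i, ∑ j, X i j * Y i j := by
  obtain ⟨m, B, hB⟩ := Matrix.posSemidef_iff_eq_sum_vecMulVec.mp hY
  have hYe : ∀ i j, Y i j = ∑ k, B k i * B k j := by
    intro i j
    rw [hB]
    simp [Matrix.sum_apply, Matrix.vecMulVec_apply]
  have key : ∑ i, ∑ j, X i j * Y i j = ∑ k, (star (fun i => B k i)) ⬝ᵥ (X *ᵥ (fun j => B k j)) := by
    simp only [hYe, Finset.mul_sum, dotProduct, mulVec, star_trivial]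
    rw [show (∑ i, ∑ j, ∑ k, X i j * (B k i * B k j)) = ∑ i, ∑ k, ∑ j, X i j * (B k i * B k j)
      from Finset.sum_congr rfl fun i _ => Finset.sum_comm, Finset.sum_comm]
    exact Finset.sum_congr rfl fun k _ => Finset.sum_congr rfl fun i _ =>
      Finset.sum_congr rfl fun j _ => by ring
  rw [key]
  exact Finset.sum_nonneg fun k _ => (Matrix.posSemidef_iff_dotProduct_mulVec.mp hX).2 _

/-- Weak duality for the KL-loss problem: for positive semidefinite `X` and `Y`, the
dual objective at `Y` is at most the primal KL objective at `X`. -/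
theorem klLoss_weak_duality (n : ℕ) (A X Y : Matrix (Fin n) (Fin n) ℝ)
    (hAsymm : A.IsSymm) (hApos : ∀ i j, 0 < A i j)
    (hX : X.PosSemidef) (hY : Y.PosSemidef)
    (hAY : ∀ i j, 0 < A i j + Y i j) :
    (∑ i, ∑ j, (A i j + Y i j - (A i j + Y i j) * Real.log (A i j + Y i j))) +
      (∑ i, ∑ j, (A i j * Real.log (A i j) - A i j)) ≤
    ∑ i, ∑ j, (A i j * (Real.log (A i j) - X i j) + Real.exp (X i j) - A i j) := by
  have hXY := sumXY_nonneg n X Y hX hY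
  have hpt : ∀ i j, X i j * Y i j ≤
      (A i j * (Real.log (A i j) - X i j) + Real.exp (X i j) - A i j)
      - (A i j + Y i j - (A i j + Y i j) * Real.log (A i j + Y i j))
      - (A i j * Real.log (A i j) - A i j) := by
    intro i j
    have hb := hAY i j
    have h1 := Real.add_one_le_exp (X i j - Real.log (A i j + Y i j))
    rw [Real.exp_sub, Real.exp_log hb] at h1
    have h2 : (X i j - Real.log (A i j + Y i j) + 1) * (A i j + Y i j) ≤ Real.exp (X i j) :=
      (le_div_iff₀ hb).mp h1
    nlinarith [h2]
  have hsum : ∑ i, ∑ j, X i j * Y i j ≤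
      ∑ i, ∑ j, ((A i j * (Real.log (A i j) - X i j) + Real.exp (X i j) - A i j)
      - (A i j + Y i j - (A i j + Y i j) * Real.log (A i j + Y i j))
      - (A i j * Real.log (A i j) - A i j)) :=
    Finset.sum_le_sum fun i _ => Finset.sum_le_sum fun j _ => hpt i j
  simp only [Finset.sum_sub_distrib, Finset.sum_add_distrib] at hsum ⊢
  linarith
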